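/- (Galvin–Prikry Lemma) Let (A_n)_{n∈ω} be a sequence of completely Ramsey subsets of [ω]^ω. Then there exists f ∈ [ω]^ω such that (⋃_{n∈ω} A_n) ∩ [f]^ω is open in the subspace topology of [f]^ω. -/

import Mathlib

open Classical

noncomputable section

/-- Baire space. -/
abbrev Baire := ℕ → ℕ

/-- `[f]^ω`: the infinite subsets of the range of `f`, identified with the
compositions `f ∘ h` for strictly increasing `h`. -/
def cube (f : Baire) : Set Baire := {x | ∃ h : Baire, StrictMono h ∧ x = f ∘ h}

/-- `g` lands in `A`: `[g]^ω ⊆ A`. -/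
def landsIn (g : Baire) (A : Set Baire) : Prop := cube g ⊆ A

/-- `g` avoids `A`: `[g]^ω ∩ A = ∅`. -/
def avoids (g : Baire) (A : Set Baire) : Prop := cube g ∩ A = ∅

/-- The homogeneous sets for `A ⊆ [ω]^ω`. -/
def HSet (A : Set Baire) : Set Baire :=
  {g | StrictMono g ∧ (landsIn g A ∨ avoids g A)}

/-- The finite increasing sequence `σ` followed by `g`. -/
def ext (σ : List ℕ) (g : Baire) : Baire := fun n =>
  if h : n < σ.length then σ.get ⟨n, h⟩ else g (n - σ.length)

/-- A Mathias condition: a finite increasing sequence `σ` together with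
`f ∈ [ω]^ω` whose entries all lie above those of `σ`. -/
def MathiasCond (σ : List ℕ) (f : Baire) : Prop :=
  σ.Pairwise (· < ·) ∧ StrictMono f ∧ ∀ i ∈ σ, ∀ n, i < f n

/-- `A` is completely Ramsey. -/
def CompletelyRamsey (A : Set Baire) : Prop :=
  ∀ σ f, MathiasCond σ f → ∃ g ∈ cube f,
    (∀ h : Baire, StrictMono h → ext σ (g ∘ h) ∈ A) ∨
    (∀ h : Baire, StrictMono h → ext σ (g ∘ h) ∉ A)

lemma self_mem_cube (f : Baire) : f ∈ cube f := ⟨id, strictMono_id, rfl⟩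

lemma cube_trans {x y z : Baire} (hx : x ∈ cube y) (hy : y ∈ cube z) : x ∈ cube z := by
  obtain ⟨h1, hm1, rfl⟩ := hx
  obtain ⟨h2, hm2, rfl⟩ := hy
  exact ⟨h2 ∘ h1, hm2.comp hm1, rfl⟩

lemma cube_sm {x g : Baire} (hx : x ∈ cube g) (hg : StrictMono g) : StrictMono x := by
  obtain ⟨h, hm, rfl⟩ := hx
  exact hg.comp hm

lemma mem_cube_of_range {g s : Baire} (hg : StrictMono g) (hs : StrictMono s)
    (h : ∀ m, s m ∈ Set.range g) : s ∈ cube g := by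
  choose H hH using h
  refine ⟨H, fun a b hab => ?_, funext fun m => (hH m).symm⟩
  have : g (H a) < g (H b) := by rw [hH a, hH b]; exact hs hab
  exact hg.lt_iff_lt.mp this
section GP
variable (A : ℕ → Set Baire)

def Dec (τ : List ℕ) (n : ℕ) (r : Baire) : Prop :=
  (∀ h : Baire, StrictMono h → ext τ (r ∘ h) ∈ A n) ∨
  (∀ h : Baire, StrictMono h → ext τ (r ∘ h) ∉ A n)

variable (hA : ∀ n, CompletelyRamsey (A n))

def step (p : List ℕ × ℕ) (r : Baire) : Baire :=
  if h : MathiasCond p.1 r then Classical.choose (hA p.2 p.1 r h) else r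

lemma step_mem_cube (p : List ℕ × ℕ) (r : Baire) : step A hA p r ∈ cube r := by
  unfold step
  split
  · exact (Classical.choose_spec (hA p.2 p.1 r ‹_›)).1
  · exact self_mem_cube r

lemma Dec_mono {τ n r r'} (hd : Dec A τ n r) (hr : r' ∈ cube r) : Dec A τ n r' := by
  obtain ⟨h0, hm0, rfl⟩ := hr
  rcases hd with hd | hd
  · exact Or.inl fun h hm => hd (h0 ∘ h) (hm0.comp hm)
  · exact Or.inr fun h hm => hd (h0 ∘ h) (hm0.comp hm)

lemma step_Dec {τ : List ℕ} {n : ℕ} {r : Baire} (h : MathiasCond τ r) :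
    Dec A τ n (step A hA (τ, n) r) := by
  unfold step
  rw [dif_pos h]
  exact (Classical.choose_spec (hA n τ r h)).2

lemma MathiasCond_mono {τ r r'} (h : MathiasCond τ r) (hr : r' ∈ cube r) : MathiasCond τ r' := by
  obtain ⟨h0, hm0, rfl⟩ := hr
  exact ⟨h.1, h.2.1.comp hm0, fun i hi m => h.2.2 i hi (h0 m)⟩

lemma foldl_mem_cube (L : List (List ℕ × ℕ)) (r : Baire) :
    L.foldl (fun r p => step A hA p r) r ∈ cube r := by
  induction L generalizing r with
  | nil => exact self_mem_cube r
  | cons p L ih => exact cube_trans (ih (step A hA p r)) (step_mem_cube A hA p r)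

lemma foldl_Dec {τ n} (L : List (List ℕ × ℕ)) (r : Baire) (hm : MathiasCond τ r)
    (hp : (τ, n) ∈ L) : Dec A τ n (L.foldl (fun r p => step A hA p r) r) := by
  induction L generalizing r with
  | nil => exact absurd hp List.not_mem_nil
  | cons p L ih =>
    rcases List.mem_cons.mp hp with h | h
    · subst h
      exact Dec_mono A (step_Dec A hA hm) (foldl_mem_cube A hA L _)
    · exact ih _ (MathiasCond_mono hm (step_mem_cube A hA p r)) h

def stems (b : ℕ) : List (List ℕ) := (List.range b).sublists.map (· ++ [b])

def pairsL (b k : ℕ) : List (List ℕ × ℕ) := (stems b).product (List.range (k + 1))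

def R : ℕ → Baire
  | 0 => id
  | k + 1 => (pairsL (R k 0) k).foldl (fun r p => step A hA p r) (R k ∘ Nat.succ)
lemma succ_sm : StrictMono Nat.succ := fun _ _ h => Nat.succ_lt_succ h

lemma R_succ_mem (k : ℕ) : R A hA (k + 1) ∈ cube (R A hA k ∘ Nat.succ) :=
  foldl_mem_cube A hA _ _

lemma R_succ_mem' (k : ℕ) : R A hA (k + 1) ∈ cube (R A hA k) :=
  cube_trans (R_succ_mem A hA k) ⟨Nat.succ, succ_sm, rfl⟩

lemma R_sm (k : ℕ) : StrictMono (R A hA k) := by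
  induction k with
  | zero => exact strictMono_id
  | succ k ih => exact cube_sm (R_succ_mem A hA k) (ih.comp succ_sm)

lemma R_succ_lt (k m : ℕ) : R A hA k 0 < R A hA (k + 1) m := by
  obtain ⟨h, hm, he⟩ := R_succ_mem A hA k
  have : R A hA (k + 1) m = R A hA k (Nat.succ (h m)) := by rw [he]; rfl
  rw [this]
  exact R_sm A hA k (Nat.succ_pos _)

lemma R_chain {j k : ℕ} (h : j ≤ k) : R A hA k ∈ cube (R A hA j) := by
  induction k with
  | zero => rw [Nat.le_zero.mp h]; exact self_mem_cube _
  | succ k ih =>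
    rcases Nat.lt_or_ge j (k + 1) with h' | h'
    · exact cube_trans (R_succ_mem' A hA k) (ih (Nat.lt_succ_iff.mp h'))
    · rw [Nat.le_antisymm h h']; exact self_mem_cube _

def aa : Baire := fun k => R A hA k 0

lemma aa_sm : StrictMono (aa A hA) :=
  strictMono_nat_of_lt_succ fun k => R_succ_lt A hA k 0

lemma aa_mem_range {k j : ℕ} (h : k < j) : aa A hA j ∈ Set.range (R A hA (k + 1)) := by
  obtain ⟨h0, hm0, he⟩ := R_chain A hA (show k + 1 ≤ j from h)
  exact ⟨h0 0, by rw [aa, he]; rfl⟩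
instance : IsAntisymm ℕ (· < ·) :=
  ⟨fun a b h1 h2 => absurd (h1.trans h2) (lt_irrefl a)⟩

lemma sorted_sublist_range {l : List ℕ} {b : ℕ} (hs : l.Pairwise (· < ·))
    (hb : ∀ x ∈ l, x < b) : List.Sublist l (List.range b) := by
  have hnd : l.Nodup := hs.imp fun h => Nat.ne_of_lt h
  have hf : (List.range b).filter (· ∈ l) = l := by
    apply List.Perm.eq_of_pairwise (fun a _ _ _ h1 h2 => absurd (h1.trans h2) (lt_irrefl a))
      (List.Pairwise.filter _ (List.pairwise_lt_range (n := b))) hs ((List.perm_ext_iff_of_nodup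
      ((List.nodup_range (n := b)).filter _) hnd).mpr ?_)
    intro x
    simp only [List.mem_filter, List.mem_range, decide_eq_true_eq]
    exact ⟨fun h => h.2, fun h => ⟨hb x h, h⟩⟩
  exact hf ▸ List.filter_sublist

lemma mem_pairsL {τ : List ℕ} {n b k : ℕ} (hs : τ.Pairwise (· < ·)) (hne : τ ≠ [])
    (hl : τ.getLast hne = b) (hn : n ≤ k) : (τ, n) ∈ pairsL b k := by
  apply List.pair_mem_product.mpr
  constructor
  · have hdec : τ.dropLast ++ [b] = τ := by rw [← hl]; exact List.dropLast_append_getLast hne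
    have hds : τ.dropLast.Pairwise (· < ·) := hs.sublist (List.dropLast_sublist τ)
    have hdb : ∀ x ∈ τ.dropLast, x < b := by
      intro x hx
      have hs' : (τ.dropLast ++ [b]).Pairwise (· < ·) := by rw [hdec]; exact hs
      exact (List.pairwise_append.mp hs').2.2 x hx b (List.mem_singleton_self b)
    rw [stems, List.mem_map]
    exact ⟨τ.dropLast, List.mem_sublists.mpr (sorted_sublist_range hds hdb), hdec⟩
  · exact List.mem_range.mpr (Nat.lt_succ_of_le hn)

lemma sorted_le_getLast {l : List ℕ} (hs : l.Pairwise (· < ·)) (hne : l ≠ [])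
    {x : ℕ} (hx : x ∈ l) : x ≤ l.getLast hne := by
  have hdec : l.dropLast ++ [l.getLast hne] = l := List.dropLast_append_getLast hne
  have hx' : x ∈ l.dropLast ++ [l.getLast hne] := by rw [hdec]; exact hx
  have hs' : (l.dropLast ++ [l.getLast hne]).Pairwise (· < ·) := by rw [hdec]; exact hs
  rcases List.mem_append.mp hx' with h | h
  · exact le_of_lt <| (List.pairwise_append.mp hs').2.2 x h _ (List.mem_singleton_self _)
  · exact le_of_eq (List.mem_singleton.mp h)

lemma R_decides {τ : List ℕ} {n k : ℕ} (hs : τ.Pairwise (· < ·)) (hne : τ ≠ [])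
    (hl : τ.getLast hne = aa A hA k) (hn : n ≤ k) : Dec A τ n (R A hA (k + 1)) := by
  show Dec A τ n ((pairsL (R A hA k 0) k).foldl (fun r p => step A hA p r) (R A hA k ∘ Nat.succ))
  apply foldl_Dec
  · refine ⟨hs, (R_sm A hA k).comp succ_sm, fun i hi m => ?_⟩
    calc i ≤ τ.getLast hne := sorted_le_getLast hs hne hi
    _ = R A hA k 0 := hl
    _ < R A hA k (Nat.succ m) := R_sm A hA k (Nat.succ_pos m)
  · exact mem_pairsL hs hne hl hn
def basicOpen (τ : List ℕ) : Set Baire := {y : Baire | ∀ i : Fin τ.length, y i = τ.get i}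

lemma isOpen_basicOpen (τ : List ℕ) : IsOpen (basicOpen τ) := by
  have : basicOpen τ = ⋂ i : Fin τ.length, (fun y : Baire => y i) ⁻¹' {τ.get i} := by
    ext y
    simp [basicOpen, Set.mem_iInter]
  rw [this]
  exact isOpen_iInter_of_finite fun i =>
    (continuous_apply (i : ℕ)).isOpen_preimage _ (isOpen_discrete _)

lemma get_ofFn_x (x : Baire) (n : ℕ) (i : ℕ) (hi : i < (List.ofFn fun j : Fin (n+1) => x j).length) :
    (List.ofFn fun j : Fin (n+1) => x j).get ⟨i, hi⟩ = x i := by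
  rw [List.get_ofFn]
  rfl

lemma getLast_ofFn_x (x : Baire) (n : ℕ) (hne : (List.ofFn fun i : Fin (n+1) => x i) ≠ []) :
    (List.ofFn fun i : Fin (n+1) => x i).getLast hne = x n := by
  have hlen : (List.ofFn fun i : Fin (n+1) => x i).length = n + 1 := List.length_ofFn
  rw [← List.get_length_sub_one (by omega)]
  rw [get_ofFn_x x n _ (by omega)]
  congr 1
  omega

lemma decomp (n : ℕ) (x : Baire) {k : ℕ} (hk : aa A hA k = x n) :
    ∀ y ∈ cube (aa A hA), y ∈ basicOpen (List.ofFn fun i : Fin (n+1) => x i) →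
    ∃ t ∈ cube (R A hA (k+1)), y = ext (List.ofFn fun i : Fin (n+1) => x i) t := by
  intro y hy hyB
  obtain ⟨h', hm', rfl⟩ := hy
  set τ := List.ofFn fun i : Fin (n+1) => x i with hτ
  have hlen : τ.length = n + 1 := List.length_ofFn
  have hyv : ∀ (i : ℕ) (hi : i < τ.length), (aa A hA ∘ h') i = x i := by
    intro i hi
    exact (hyB ⟨i, hi⟩).trans (get_ofFn_x x n i hi)
  have hn' : h' n = k := by
    have h1 : aa A hA (h' n) = x n := hyv n (by omega)
    exact (aa_sm A hA).injective (h1.trans hk.symm)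
  refine ⟨fun i => (aa A hA ∘ h') (n + 1 + i), ?_, ?_⟩
  · apply mem_cube_of_range (R_sm A hA (k+1))
    · intro i j hij
      exact (aa_sm A hA) (hm' (by omega))
    · intro m'
      apply aa_mem_range
      rw [← hn']
      exact hm' (by omega)
  · funext i
    show (aa A hA ∘ h') i = ext τ _ i
    unfold ext
    by_cases hi : i < τ.length
    · rw [dif_pos hi, get_ofFn_x x n i hi]
      exact hyv i hi
    · rw [dif_neg hi]
      congr 1
      omega

theorem galvin_prikry_lemma' (hA : ∀ n, CompletelyRamsey (A n)) :
    ∃ f : Baire, StrictMono f ∧ ∃ U : Set Baire, IsOpen U ∧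
      (⋃ n, A n) ∩ cube f = U ∩ cube f := by
  refine ⟨aa A hA, aa_sm A hA, ?_⟩
  refine ⟨⋃ (τ : List ℕ), ⋃ (n : ℕ),
    (if (∀ y ∈ cube (aa A hA), y ∈ basicOpen τ → y ∈ A n) then basicOpen τ else ∅), ?_, ?_⟩
  · apply isOpen_iUnion
    intro τ
    apply isOpen_iUnion
    intro n
    split
    · exact isOpen_basicOpen τ
    · exact isOpen_empty
  · ext x
    constructor
    · rintro ⟨hxU, hxc⟩
      obtain ⟨n, hxA⟩ := Set.mem_iUnion.mp hxU
      obtain ⟨h, hm, hxe⟩ := hxc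
      set τ := List.ofFn fun i : Fin (n+1) => x i with hτ
      have hlen : τ.length = n + 1 := List.length_ofFn
      have hxsm : StrictMono x := by
        rw [hxe]; exact (aa_sm A hA).comp hm
      have hk : aa A hA (h n) = x n := by rw [hxe]; rfl
      have hxB : x ∈ basicOpen τ := by
        intro i
        exact (get_ofFn_x x n i i.2).symm
      have hd := decomp A hA n x hk
      have hs : τ.Pairwise (· < ·) := by
        apply List.pairwise_iff_get.mpr
        intro i j hij
        rw [List.get_ofFn, List.get_ofFn]
        exact hxsm (show (i : ℕ) < (j : ℕ) from hij)
      have hne : τ ≠ [] := by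
        intro hemp
        rw [hemp] at hlen
        simp at hlen
      have hl : τ.getLast hne = aa A hA (h n) :=
        (getLast_ofFn_x x n hne).trans hk.symm
      have hdec := R_decides A hA hs hne hl (StrictMono.le_apply hm)
      rcases hdec with hin | hout
      · have good : ∀ y ∈ cube (aa A hA), y ∈ basicOpen τ → y ∈ A n := by
          intro y hy hyB
          obtain ⟨t, htc, hyt⟩ := hd y hy hyB
          obtain ⟨h0, hm0, ht0⟩ := htc
          rw [ht0] at hyt
          rw [hyt]
          exact hin h0 hm0
        refine ⟨Set.mem_iUnion.mpr ⟨τ, Set.mem_iUnion.mpr ⟨n, ?_⟩⟩, ⟨h, hm, hxe⟩⟩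
        rw [if_pos good]
        exact hxB
      · exfalso
        obtain ⟨t, htc, hxt⟩ := hd x ⟨h, hm, hxe⟩ hxB
        obtain ⟨h0, hm0, ht0⟩ := htc
        rw [ht0] at hxt
        exact hout h0 hm0 (hxt ▸ hxA)
    · rintro ⟨hxU, hxc⟩
      obtain ⟨τ, hx1⟩ := Set.mem_iUnion.mp hxU
      obtain ⟨n, hx2⟩ := Set.mem_iUnion.mp hx1
      by_cases hP : ∀ y ∈ cube (aa A hA), y ∈ basicOpen τ → y ∈ A n
      · rw [if_pos hP] at hx2
        exact ⟨Set.mem_iUnion.mpr ⟨n, hP x hxc hx2⟩, hxc⟩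
      · rw [if_neg hP] at hx2
        exact absurd hx2 (Set.notMem_empty x)

end GP

/-- Galvin–Prikry Lemma: for a sequence of completely Ramsey sets there is
`f ∈ [ω]^ω` such that `(⋃ n, A n) ∩ [f]^ω` is open in the subspace topology
of `[f]^ω`. -/
theorem galvin_prikry_lemma (A : ℕ → Set Baire) (hA : ∀ n, CompletelyRamsey (A n)) :
    ∃ f : Baire, StrictMono f ∧ ∃ U : Set Baire, IsOpen U ∧
      (⋃ n, A n) ∩ cube f = U ∩ cube f := by
  exact galvin_prikry_lemma' A hA
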